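/- Let V be a finite set of n vertices and let E be a finite multiset of edges, each edge being an unordered pair of (possibly equal) elements of V, with |E| < n. Let X ⊆ V be maximal (with respect to inclusion) among subsets of V such that the number of edges of E with both endpoints in X is at least |X|. Then no edge of E has exactly one endpoint in X; that is, every edge either has both endpoints in X or both endpoints in V∖X. -/

import Mathlib

open Finset
open Classical

lemma sym2_aux {V : Type*} [DecidableEq V] (e : Sym2 V) (x y : V) (X : Finset V)
    (hxe : x ∈ e) (hye : y ∈ e) (hxX : x ∉ X) (hyX : y ∈ X) :
    ∀ z ∈ e, z ∈ insert x X := by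
  induction e using Sym2.ind with
  | _ u v =>
    intro z hz
    have hxy : x ≠ y := fun h => hxX (h ▸ hyX)
    simp only [Sym2.mem_iff] at hz hxe hye
    rcases hz with rfl | rfl <;> rcases hxe with rfl | rfl <;>
      rcases hye with rfl | rfl <;> simp_all

/-- In a multigraph with `|E| < |V|`, if `X` is maximal (w.r.t. inclusion)
among vertex sets inducing at least `|X|` edges, then no edge has exactly one endpoint
in `X`: every edge lies entirely inside `X` or entirely inside `V \ X`. -/
theorem no_crossing_edges {V : Type*} [Fintype V] [DecidableEq V]
    (E : Multiset (Sym2 V)) (hE : Multiset.card E < Fintype.card V)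
    (X : Finset V)
    (hX : X.card ≤ Multiset.card (E.filter fun e => ∀ x ∈ e, x ∈ X))
    (hmax : ∀ Y : Finset V, X ⊆ Y →
      Y.card ≤ Multiset.card (E.filter fun e => ∀ x ∈ e, x ∈ Y) → Y = X) :
    ∀ e ∈ E, (∀ x ∈ e, x ∈ X) ∨ (∀ x ∈ e, x ∉ X) := by
  intro e he
  by_contra hcon
  push_neg at hcon
  obtain ⟨⟨x, hxe, hxX⟩, y, hye, hyX⟩ := hcon
  -- every vertex of e is in insert x X
  have hmem : ∀ z ∈ e, z ∈ insert x X :=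
    sym2_aux e x y X hxe hye hxX hyX
  set Y := insert x X with hY
  have hXY : X ⊆ Y := Finset.subset_insert _ _
  have hcard : Y.card = X.card + 1 := Finset.card_insert_of_notMem hxX
  -- counting: filter for Y contains filter for X plus e
  have key : Multiset.card (E.filter fun e => ∀ x ∈ e, x ∈ X) + 1 ≤
      Multiset.card (E.filter fun e => ∀ x ∈ e, x ∈ Y) := by
    have hsub : (E.filter fun e => ∀ x ∈ e, x ∈ X) + {e} ≤
        E.filter fun e => ∀ x ∈ e, x ∈ Y := by
      rw [Multiset.le_iff_count]
      intro a
      rw [Multiset.count_add, Multiset.count_filter, Multiset.count_filter]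
      by_cases haY : ∀ x ∈ a, x ∈ Y
      · rw [if_pos haY]
        by_cases haX : ∀ x ∈ a, x ∈ X
        · rw [if_pos haX]
          have hae : a ≠ e := by
            rintro rfl; exact hxX (haX x hxe)
          rw [Multiset.count_singleton, if_neg hae]
          simpa using Multiset.count_le_card a E ▸ Multiset.count_le_of_le a le_rfl
        · rw [if_neg haX]
          rcases eq_or_ne a e with rfl | hne
          · simpa using Nat.succ_le_of_lt (Multiset.count_pos.mpr he)
          · simp [Multiset.count_singleton, hne]
      · have haX : ¬ ∀ x ∈ a, x ∈ X := fun h => haY fun z hz => hXY (h z hz)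
        have hae : a ≠ e := by rintro rfl; exact haY hmem
        simp [haX, haY, Multiset.count_singleton, hae]
    calc Multiset.card (E.filter fun e => ∀ x ∈ e, x ∈ X) + 1
        = Multiset.card ((E.filter fun e => ∀ x ∈ e, x ∈ X) + {e}) := by
          simp
      _ ≤ _ := Multiset.card_le_card hsub
  have hYle : Y.card ≤ Multiset.card (E.filter fun e => ∀ x ∈ e, x ∈ Y) := by
    omega
  have := hmax Y hXY hYle
  exact hxX (this ▸ Finset.mem_insert_self x X)
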